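/- For any two unit vectors v, w in a real inner product space, defining θ(v,w) = arccos |⟨v,w⟩|, one has θ(v,w) = 2·arcsin((1/2)·min{‖v-w‖, ‖v+w‖}). -/

import Mathlib

theorem angle_eq_two_arcsin_half_min
    {E : Type*} [NormedAddCommGroup E] [InnerProductSpace ℝ E]
    (v w : E) (hv : ‖v‖ = 1) (hw : ‖w‖ = 1) :
    Real.arccos |(inner ℝ v w : ℝ)| =
      2 * Real.arcsin ((1 / 2) * min ‖v - w‖ ‖v + w‖) := by
  set i : ℝ := inner ℝ v w with hi
  have habs : |i| ≤ 1 := by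
    have := abs_real_inner_le_norm v w
    simp only [hv, hw, mul_one] at this; rwa [hi]
  have habs0 : (0:ℝ) ≤ |i| := abs_nonneg i
  have h1 : ‖v - w‖ ^ 2 = 2 - 2 * i := by
    rw [@norm_sub_sq_real E, hv, hw]; ring_nf; rw [hi]
  have h2 : ‖v + w‖ ^ 2 = 2 + 2 * i := by
    rw [@norm_add_sq_real E, hv, hw]; ring_nf; rw [hi]
  set m : ℝ := min ‖v - w‖ ‖v + w‖ with hm
  have hm0 : (0:ℝ) ≤ m := le_min (norm_nonneg _) (norm_nonneg _)
  have hmsq : m ^ 2 = 2 - 2 * |i| := by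
    rcases le_total i 0 with h | h
    · have habs' : |i| = -i := abs_of_nonpos h
      have hsq : ‖v + w‖ ^ 2 ≤ ‖v - w‖ ^ 2 := by rw [h1, h2]; linarith
      have hle : ‖v + w‖ ≤ ‖v - w‖ :=
        (pow_le_pow_iff_left₀ (norm_nonneg _) (norm_nonneg _) two_ne_zero).mp hsq
      rw [hm, min_eq_right hle, h2, habs']; try ring
    · have habs' : |i| = i := abs_of_nonneg h
      have hsq : ‖v - w‖ ^ 2 ≤ ‖v + w‖ ^ 2 := by rw [h1, h2]; linarith
      have hle : ‖v - w‖ ≤ ‖v + w‖ :=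
        (pow_le_pow_iff_left₀ (norm_nonneg _) (norm_nonneg _) two_ne_zero).mp hsq
      rw [hm, min_eq_left hle, h1, habs']; try ring
  set s : ℝ := (1 / 2) * m with hs
  have hs0 : (0:ℝ) ≤ s := by positivity
  have hssq : s ^ 2 = (1 - |i|) / 2 := by rw [hs, mul_pow, hmsq]; ring
  have hs1 : s ≤ 1 := by
    have : s ^ 2 ≤ 1 := by rw [hssq]; linarith
    exact (pow_le_one_iff_of_nonneg hs0 two_ne_zero).mp this
  have key : Real.cos (Real.arccos |i|) = Real.cos (2 * Real.arcsin s) := by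
    rw [Real.cos_arccos (by linarith) habs, Real.cos_two_mul, Real.cos_arcsin,
      Real.sq_sqrt (by nlinarith)]
    rw [hssq]; ring
  have h3 : Real.arccos |i| ∈ Set.Icc 0 Real.pi :=
    ⟨Real.arccos_nonneg _, Real.arccos_le_pi _⟩
  have h4 : 2 * Real.arcsin s ∈ Set.Icc 0 Real.pi := by
    constructor
    · have := Real.arcsin_nonneg.mpr hs0; linarith
    · have := Real.arcsin_le_pi_div_two s; linarith
  exact Real.injOn_cos h3 h4 key
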